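/- Suppose f : S¹ × [a,b] → S¹ × [a,b] is C², f(x,t) = (f_t(x), t), the rotation number ρ(t) = ρ(f_t) is strictly monotone increasing, ρ(t₀) = 0, and f_{t₀} = Id with ∂f_t/∂t(x, t₀) > 0 for all x. Define for t > t₀ the rotation time T_t as the least integer n with F_tⁿ(0) ≥ 1, where F_t is the lift of f_t with translation number in (0,1). Then lim_{t↓t₀} (t − t₀)·T_t = ∫_{S¹} (∂f_t/∂t(x, t₀))⁻¹ dx. -/

import Mathlib

open Filter Topology Set

noncomputable section

abbrev S1 : Type := AddCircle (1 : ℝ)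

/-- `F : ℝ → ℝ` is a lift of the orientation-preserving circle map `f`. -/
def IsLiftOf (F : ℝ → ℝ) (f : S1 → S1) : Prop :=
  StrictMono F ∧ Continuous F ∧ (∀ x, F (x + 1) = F x + 1) ∧
    ∀ x : ℝ, ((F x : ℝ) : S1) = f (x : S1)

/-- `τ` is the translation number of the lift `F`. -/
def HasTransNum (F : ℝ → ℝ) (τ : ℝ) : Prop :=
  Tendsto (fun n : ℕ => F^[n] 0 / (n : ℝ)) atTop (𝓝 τ)

/-- `r` is the rotation number of the circle map `f`. -/
def HasRotNum (f : S1 → S1) (r : S1) : Prop :=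
  ∃ F τ, IsLiftOf F f ∧ HasTransNum F τ ∧ ((τ : ℝ) : S1) = r

/-- Auxiliary: continuity of the partial `t`-derivative at `t₀` and a uniform
first-order Taylor estimate in `t`, extracted from `C²` smoothness. -/
theorem rotation_time_limit_aux (a b : ℝ) (hab : a < b) (F : ℝ → ℝ → ℝ)
    (hC2 : ContDiffOn ℝ 2 (fun p : ℝ × ℝ => F p.1 p.2) (univ ×ˢ Icc a b))
    (t₀ : ℝ) (ht₀ : t₀ ∈ Icc a b)
    (hid : ∀ x : ℝ, F x t₀ = x) :
    Continuous (fun x => derivWithin (fun t => F x t) (Icc a b) t₀) ∧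
    ∃ A : ℝ, 0 < A ∧ ∀ x ∈ Icc (0:ℝ) 2, ∀ t ∈ Ioc t₀ b,
      |F x t - x - (t - t₀) * derivWithin (fun t => F x t) (Icc a b) t₀|
        ≤ A * (t - t₀) ^ 2 := by
  classical
  set G : ℝ × ℝ → ℝ := fun p => F p.1 p.2 with hG
  set S : Set (ℝ × ℝ) := univ ×ˢ Icc a b with hS
  have hSu : UniqueDiffOn ℝ S := uniqueDiffOn_univ.prod (uniqueDiffOn_Icc hab)
  have hGdiff : DifferentiableOn ℝ G S := hC2.differentiableOn (by norm_num)
  set fd := fderivWithin ℝ G S with hfd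
  have hfd1 : ContDiffOn ℝ 1 fd S := hC2.fderivWithin hSu (by norm_num)
  have hfdcont : ContinuousOn fd S := hfd1.continuousOn
  have hfd'cont : ContinuousOn (fderivWithin ℝ fd S) S := hfd1.continuousOn_fderivWithin hSu le_rfl
  have hfddiff : DifferentiableOn ℝ fd S := hfd1.differentiableOn (by norm_num)
  set K : Set (ℝ × ℝ) := Icc (0:ℝ) 2 ×ˢ Icc a b with hK
  have hKS : K ⊆ S := prod_mono (subset_univ _) le_rfl
  have hKc : IsCompact K := isCompact_Icc.prod isCompact_Icc
  have hKconv : Convex ℝ K := (convex_Icc _ _).prod (convex_Icc a b)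
  obtain ⟨A₀, hA₀⟩ := hKc.exists_bound_of_continuousOn (f := fderivWithin ℝ fd S) (hfd'cont.mono hKS)
  set A := A₀ + 1 with hAdef
  have hA : ∀ p ∈ K, ‖fderivWithin ℝ fd S p‖ ≤ A := fun p hp => (hA₀ p hp).trans (by linarith)
  have hA0 : 0 < A := lt_of_le_of_lt (norm_nonneg _)
    (lt_of_le_of_lt (hA₀ (0, t₀) ⟨⟨le_rfl, by norm_num⟩, ht₀⟩) (by linarith))
  have hfdlip : ∀ p ∈ K, ∀ q ∈ K, ‖fd p - fd q‖ ≤ A * ‖p - q‖ := by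
    intro p hp q hq
    exact Convex.norm_image_sub_le_of_norm_hasFDerivWithin_le
      (fun z hz => ((hfddiff z (hKS hz)).hasFDerivWithinAt).mono hKS)
      hA hKconv hq hp
  -- partial derivative in t
  set ψ : ℝ → ℝ → ℝ := fun x t => fd (x, t) ((0:ℝ), (1:ℝ)) with hψ
  have hψd : ∀ x : ℝ, ∀ t ∈ Icc a b, HasDerivWithinAt (fun s => F x s) (ψ x t) (Icc a b) t := by
    intro x t ht
    have h1 : HasDerivWithinAt (fun s : ℝ => ((x, s) : ℝ × ℝ)) ((0:ℝ), (1:ℝ)) (Icc a b) t :=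
      HasDerivWithinAt.prodMk (hasDerivWithinAt_const _ _ x) (hasDerivWithinAt_id _ _)
    have h2 : HasFDerivWithinAt G (fd (x, t)) S (x, t) :=
      (hGdiff (x, t) ⟨trivial, ht⟩).hasFDerivWithinAt
    exact h2.comp_hasDerivWithinAt t h1 (fun s hs => ⟨trivial, hs⟩)
  set h : ℝ → ℝ := fun x => derivWithin (fun t => F x t) (Icc a b) t₀ with hh
  have hhψ : ∀ x, h x = ψ x t₀ := fun x =>
    (hψd x t₀ ht₀).derivWithin (uniqueDiffOn_Icc hab t₀ ht₀)
  constructor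
  · have h1 : Continuous fun x : ℝ => fd (x, t₀) :=
      hfdcont.comp_continuous (continuous_id.prodMk continuous_const) (fun x => ⟨trivial, ht₀⟩)
    have h2 : Continuous fun x : ℝ => ψ x t₀ := h1.clm_apply continuous_const
    simpa [funext hhψ] using h2
  refine ⟨A, hA0, ?_⟩
  have hnorm01 : ‖((0:ℝ), (1:ℝ))‖ = 1 := by simp [Prod.norm_def]
  intro x hx t ht
  have htab : t ∈ Icc a b := ⟨ht₀.1.trans ht.1.le, ht.2⟩
  have hsub : Icc t₀ t ⊆ Icc a b := Icc_subset_Icc ht₀.1 htab.2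
  have key : ∀ s ∈ Icc t₀ t, HasDerivWithinAt (fun u => F x u - u * ψ x t₀)
      (ψ x s - ψ x t₀) (Icc t₀ t) s := by
    intro s hs
    have h1 := (hψd x s (hsub hs)).mono hsub
    have h2 := h1.sub ((hasDerivWithinAt_id s _).mul_const (ψ x t₀))
    rw [one_mul] at h2
    exact h2
  have bound : ∀ s ∈ Icc t₀ t, ‖ψ x s - ψ x t₀‖ ≤ A * (t - t₀) := by
    intro s hs
    have h1 : ((x, s) : ℝ × ℝ) ∈ K := ⟨hx, hsub hs⟩
    have h2 : ((x, t₀) : ℝ × ℝ) ∈ K := ⟨hx, ht₀⟩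
    have hd : ‖((x, s) : ℝ × ℝ) - (x, t₀)‖ = |s - t₀| := by
      rw [Prod.mk_sub_mk, sub_self, Prod.norm_def]
      simp [Real.norm_eq_abs]
    calc ‖ψ x s - ψ x t₀‖ = ‖(fd (x, s) - fd (x, t₀)) ((0:ℝ), (1:ℝ))‖ := by
          simp [hψ]
      _ ≤ ‖fd (x, s) - fd (x, t₀)‖ * ‖((0:ℝ), (1:ℝ))‖ := (fd (x, s) - fd (x, t₀)).le_opNorm _
      _ = ‖fd (x, s) - fd (x, t₀)‖ := by rw [hnorm01, mul_one]
      _ ≤ A * ‖((x, s) : ℝ × ℝ) - (x, t₀)‖ := hfdlip _ h1 _ h2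
      _ = A * |s - t₀| := by rw [hd]
      _ ≤ A * (t - t₀) := by
          apply mul_le_mul_of_nonneg_left _ hA0.le
          rw [abs_of_nonneg (by linarith [hs.1])]; linarith [hs.2]
  have hmem₀ : t₀ ∈ Icc t₀ t := left_mem_Icc.2 ht.1.le
  have hmemt : t ∈ Icc t₀ t := right_mem_Icc.2 ht.1.le
  have hest := Convex.norm_image_sub_le_of_norm_hasDerivWithin_le key bound
    (convex_Icc t₀ t) hmem₀ hmemt
  rw [Real.norm_eq_abs, Real.norm_eq_abs] at hest
  have heq : F x t - t * ψ x t₀ - (F x t₀ - t₀ * ψ x t₀) = F x t - x - (t - t₀) * h x := by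
    rw [hid x, hhψ x]; ring
  rw [heq, abs_of_nonneg (sub_nonneg.2 ht.1.le)] at hest
  calc |F x t - x - (t - t₀) * h x| ≤ A * (t - t₀) * (t - t₀) := hest
    _ = A * (t - t₀) ^ 2 := by ring

/-- The rotation time `T_t` (least `n` with `F_t^[n] 0 ≥ 1`) satisfies
`(t - t₀) T_t → ∫_{S¹} (∂F/∂t(x,t₀))⁻¹ dx` as `t ↓ t₀`. -/
theorem rotation_time_limit (a b : ℝ) (hab : a < b) (F : ℝ → ℝ → ℝ)
    (hC2 : ContDiffOn ℝ 2 (fun p : ℝ × ℝ => F p.1 p.2) (univ ×ˢ Icc a b))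
    (hper : ∀ x : ℝ, ∀ t ∈ Icc a b, F (x + 1) t = F x t + 1)
    (hmono : ∀ t ∈ Icc a b, StrictMono fun x => F x t)
    (ρ : ℝ → ℝ) (hρ : ∀ t ∈ Icc a b, HasTransNum (fun x => F x t) (ρ t))
    (hρmono : StrictMonoOn ρ (Icc a b))
    (t₀ : ℝ) (ht₀ : t₀ ∈ Icc a b) (hρ0 : ρ t₀ = 0)
    (hid : ∀ x : ℝ, F x t₀ = x)
    (hpos : ∀ x : ℝ, 0 < derivWithin (fun t => F x t) (Icc a b) t₀)
    (T : ℝ → ℕ)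
    (hT : ∀ t ∈ Ioc t₀ b,
      1 ≤ (fun x => F x t)^[T t] 0 ∧ ∀ m < T t, (fun x => F x t)^[m] 0 < 1) :
    Tendsto (fun t => (t - t₀) * (T t : ℝ)) (𝓝[Ioc t₀ b] t₀)
      (𝓝 (∫ x in (0:ℝ)..1, (derivWithin (fun t => F x t) (Icc a b) t₀)⁻¹)) := by
  classical
  obtain ⟨hhcont, A, hA0, htaylor⟩ := rotation_time_limit_aux a b hab F hC2 t₀ ht₀ hid
  clear hC2 hper hmono hρ hρmono hρ0
  set h : ℝ → ℝ := fun x => derivWithin (fun t => F x t) (Icc a b) t₀ with hh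
  have hhpos : ∀ x, 0 < h x := hpos
  clear hpos
  -- extrema of h on [0,2]
  obtain ⟨xc, hxcmem, hxcmin⟩ := isCompact_Icc.exists_isMinOn
    (nonempty_Icc.2 (by norm_num : (0:ℝ) ≤ 2)) hhcont.continuousOn
  obtain ⟨c, hcdef⟩ : ∃ c : ℝ, c = h xc := ⟨_, rfl⟩
  have hc0 : 0 < c := hcdef ▸ hhpos xc
  have hcle : ∀ u ∈ Icc (0:ℝ) 2, c ≤ h u := fun u hu => hcdef ▸ isMinOn_iff.1 hxcmin u hu
  obtain ⟨xM, hxMmem, hxMmax⟩ := isCompact_Icc.exists_isMaxOn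
    (nonempty_Icc.2 (by norm_num : (0:ℝ) ≤ 2)) hhcont.continuousOn
  obtain ⟨Hh, hHhdef⟩ : ∃ Hh : ℝ, Hh = h xM := ⟨_, rfl⟩
  have hHh0 : 0 < Hh := hHhdef ▸ hhpos xM
  have hHley : ∀ u ∈ Icc (0:ℝ) 2, h u ≤ Hh := fun u hu => hHhdef ▸ isMaxOn_iff.1 hxMmax u hu
  obtain ⟨M, hMdef⟩ : ∃ M : ℝ, M = Hh + A * (b - a) + 1 := ⟨_, rfl⟩
  have hM1 : 1 ≤ M := by
    have := mul_pos hA0 (sub_pos.2 hab); rw [hMdef]; linarith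
  have hM0 : 0 < M := lt_of_lt_of_le one_pos hM1
  -- the integrand
  set H : ℝ → ℝ := fun x => (h x)⁻¹ with hHdef
  have hHcont : Continuous H := hhcont.inv₀ (fun x => (hhpos x).ne')
  have hHpos : ∀ x, 0 < H x := fun x => inv_pos.2 (hhpos x)
  have hHle : ∀ u ∈ Icc (0:ℝ) 2, H u ≤ c⁻¹ := fun u hu => inv_anti₀ hc0 (hcle u hu)
  have hHmul : ∀ u : ℝ, h u * H u = 1 := fun u => mul_inv_cancel₀ (hhpos u).ne'
  clear_value H
  clear hxcmin hxMmax hhcont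
  show Tendsto (fun t => (t - t₀) * (T t : ℝ)) (𝓝[Ioc t₀ b] t₀) (𝓝 (∫ x in (0:ℝ)..1, H x))
  rw [Metric.tendsto_nhdsWithin_nhds]
  intro ε hε
  obtain ⟨δω, hδω0, hδω⟩ := Metric.uniformContinuousOn_iff.1
    (isCompact_Icc.uniformContinuousOn_of_continuous
      (hHcont.continuousOn : ContinuousOn H (Icc (0:ℝ) 2))) (ε/6) (by positivity)
  obtain ⟨B, hBdef⟩ : ∃ B : ℝ, B = 4*A/c^2 + M/c := ⟨_, rfl⟩
  have hB0 : 0 < B := by rw [hBdef]; positivity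
  refine ⟨min (min (c/(2*A)) (1/(2*M))) (min (δω/(2*M)) (ε/(3*B))), by positivity, ?_⟩
  intro t ht hdist
  obtain ⟨s, hsdef⟩ : ∃ s : ℝ, s = t - t₀ := ⟨_, rfl⟩
  have hs0 : 0 < s := hsdef ▸ sub_pos.2 ht.1
  have hsδ : s < min (min (c/(2*A)) (1/(2*M))) (min (δω/(2*M)) (ε/(3*B))) := by
    rw [hsdef]
    rwa [Real.dist_eq, abs_of_pos (sub_pos.2 ht.1)] at hdist
  have hs1 : A * s < c/2 := by
    have h' := (lt_div_iff₀ (by positivity : (0:ℝ) < 2*A)).1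
      (hsδ.trans_le ((min_le_left _ _).trans (min_le_left _ _)))
    calc A * s = s * (2*A) / 2 := by ring
      _ < c/2 := by linarith
  have hs2 : M * s < 1/2 := by
    have h' := (lt_div_iff₀ (by positivity : (0:ℝ) < 2*M)).1
      (hsδ.trans_le ((min_le_left _ _).trans (min_le_right _ _)))
    calc M * s = s * (2*M) / 2 := by ring
      _ < 1/2 := by linarith
  have hs3 : M * s < δω := by
    have h' := (lt_div_iff₀ (by positivity : (0:ℝ) < 2*M)).1
      (hsδ.trans_le ((min_le_right _ _).trans (min_le_left _ _)))
    have : s * (2*M) / 2 < δω := by linarith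
    calc M * s = s * (2*M) / 2 := by ring
      _ < δω := this
  have hs4 : B * s < ε/3 := by
    have h' := (lt_div_iff₀ (by positivity : (0:ℝ) < 3*B)).1
      (hsδ.trans_le ((min_le_right _ _).trans (min_le_right _ _)))
    calc B * s = s * (3*B) / 3 := by ring
      _ < ε/3 := by linarith
  clear hsδ hdist
  have hsba : s ≤ b - a := by
    have h1 := ht.2; have h2 := ht₀.1; rw [hsdef]; linarith
  set n := T t with hndef
  set X : ℕ → ℝ := fun k => (fun y => F y t)^[k] 0 with hX
  have hX0 : X 0 = 0 := rfl
  have hXs : ∀ k, X (k+1) = F (X k) t := fun k => Function.iterate_succ_apply' _ _ _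
  have hTn : (1:ℝ) ≤ X n := (hT t ht).1
  have hTlt : ∀ m < n, X m < 1 := (hT t ht).2
  clear_value X n
  clear hT hX hndef
  -- one-step bounds
  have hstep : ∀ u ∈ Icc (0:ℝ) 2,
      (c/2) * s ≤ F u t - u ∧ F u t - u ≤ M * s ∧ |F u t - u - s * h u| ≤ A * s^2 := by
    intro u hu
    have h1 := htaylor u hu t ht
    rw [← hsdef] at h1
    have h2 := abs_le.1 h1
    have hcu := hcle u hu
    have hHu := hHley u hu
    have e1 : A * s^2 ≤ (c/2) * s := by
      calc A * s^2 = (A*s) * s := by ring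
        _ ≤ (c/2) * s := mul_le_mul_of_nonneg_right hs1.le hs0.le
    have e2 : s * c ≤ s * h u := mul_le_mul_of_nonneg_left hcu hs0.le
    have e3 : A * s^2 ≤ (A * (b - a)) * s := by
      calc A * s^2 = (A*s) * s := by ring
        _ ≤ (A * (b-a)) * s :=
            mul_le_mul_of_nonneg_right (mul_le_mul_of_nonneg_left hsba hA0.le) hs0.le
    have e4 : s * h u ≤ s * Hh := mul_le_mul_of_nonneg_left hHu hs0.le
    have e7 : M * s = Hh * s + (A * (b-a)) * s + s := by rw [hMdef]; ring
    refine ⟨by linarith [h2.1], by linarith [h2.2], h1⟩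
  clear htaylor
  -- iterates stay in range
  have hXb : ∀ k, k ≤ n → 0 ≤ X k ∧ X k ≤ 1 + M * s := by
    intro k
    induction k with
    | zero =>
      intro _
      rw [hX0]
      have := mul_pos hM0 hs0
      exact ⟨le_rfl, by linarith⟩
    | succ k ih =>
      intro hk1
      have hk : k < n := hk1
      obtain ⟨h0, _⟩ := ih hk.le
      have hlt1 : X k < 1 := hTlt k hk
      have hu : X k ∈ Icc (0:ℝ) 2 := ⟨h0, by linarith⟩
      obtain ⟨hl, hup, _⟩ := hstep (X k) hu
      have hcs : 0 < (c/2) * s := by positivity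
      constructor
      · rw [hXs]; linarith
      · rw [hXs]; linarith
  have hXmem : ∀ k, k ≤ n → X k ∈ Icc (0:ℝ) 2 := by
    intro k hk
    obtain ⟨h0, h2⟩ := hXb k hk
    exact ⟨h0, by linarith⟩
  have hstepk : ∀ k, k < n →
      (c/2) * s ≤ X (k+1) - X k ∧ X (k+1) - X k ≤ M * s ∧
        |X (k+1) - X k - s * h (X k)| ≤ A * s^2 := by
    intro k hk
    have := hstep (X k) (hXmem k hk.le)
    rw [hXs]
    exact this
  -- sum of steps
  have hsum : ∑ k ∈ Finset.range n, (X (k+1) - X k) = X n := by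
    rw [Finset.sum_range_sub, hX0, sub_zero]
  have hXn2 : X n ≤ 2 := by
    have := (hXb n le_rfl).2; linarith
  have hns : (n:ℝ) * s ≤ 4/c := by
    have hlow : (n:ℝ) * ((c/2) * s) ≤ X n := by
      rw [← hsum]
      calc (n:ℝ) * ((c/2) * s) = ∑ _k ∈ Finset.range n, (c/2) * s := by
            rw [Finset.sum_const, Finset.card_range, nsmul_eq_mul]
        _ ≤ ∑ k ∈ Finset.range n, (X (k+1) - X k) :=
            Finset.sum_le_sum (fun k hk => (hstepk k (Finset.mem_range.1 hk)).1)
    rw [le_div_iff₀ hc0]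
    nlinarith [hlow, hXn2, hc0, hs0]
  -- per-term estimate
  have hterm : ∀ k, k < n →
      |s - ∫ y in X k..X (k+1), H y| ≤ A*s^2/c + (ε/6)*(X (k+1) - X k) := by
    intro k hk
    obtain ⟨hl, hup, htay⟩ := hstepk k hk
    have humem : X k ∈ Icc (0:ℝ) 2 := hXmem k hk.le
    have hvmem : X (k+1) ∈ Icc (0:ℝ) 2 := hXmem (k+1) hk
    have hcs : 0 < (c/2) * s := by positivity
    have huv : X k ≤ X (k+1) := by linarith
    have hint : IntervalIntegrable H MeasureTheory.volume (X k) (X (k+1)) :=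
      hHcont.intervalIntegrable _ _
    have h2 : |(X (k+1) - X k) * H (X k) - ∫ y in X k..X (k+1), H y|
        ≤ (ε/6) * (X (k+1) - X k) := by
      have heq2 : (X (k+1) - X k) * H (X k) - (∫ y in X k..X (k+1), H y)
          = ∫ y in X k..X (k+1), (H (X k) - H y) := by
        rw [intervalIntegral.integral_sub (intervalIntegrable_const) hint,
          intervalIntegral.integral_const, smul_eq_mul]
      rw [heq2]
      have hb : ∀ y ∈ Set.uIoc (X k) (X (k+1)), ‖H (X k) - H y‖ ≤ ε/6 := by
        intro y hy
        rw [uIoc_of_le huv] at hy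
        have hymem : y ∈ Icc (0:ℝ) 2 := ⟨by linarith [humem.1, hy.1.le], by linarith [hvmem.2, hy.2]⟩
        have hdy : dist (X k) y < δω := by
          rw [Real.dist_eq, abs_of_nonpos (by linarith [hy.1.le])]
          linarith [hy.2]
        have := hδω (X k) humem y hymem hdy
        rw [Real.dist_eq] at this
        rw [Real.norm_eq_abs]
        exact this.le
      calc ‖∫ y in X k..X (k+1), (H (X k) - H y)‖
          ≤ (ε/6) * |X (k+1) - X k| := intervalIntegral.norm_integral_le_of_norm_le_const hb
        _ = (ε/6) * (X (k+1) - X k) := by rw [abs_of_nonneg (by linarith)]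
    have h1 : |s - (X (k+1) - X k) * H (X k)| ≤ A*s^2/c := by
      have heq1 : s - (X (k+1) - X k) * H (X k)
          = (s * h (X k) - (X (k+1) - X k)) * H (X k) := by
        linear_combination (-s) * hHmul (X k)
      rw [heq1, abs_mul]
      have e1 : |s * h (X k) - (X (k+1) - X k)| ≤ A * s^2 := by
        rw [abs_sub_comm]
        exact htay
      have e2 : |H (X k)| ≤ c⁻¹ := by
        rw [abs_of_pos (hHpos (X k))]; exact hHle _ humem
      calc |s * h (X k) - (X (k+1) - X k)| * |H (X k)| ≤ (A * s^2) * c⁻¹ :=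
            mul_le_mul e1 e2 (abs_nonneg _) (by positivity)
        _ = A*s^2/c := by rw [div_eq_mul_inv]
    calc |s - ∫ y in X k..X (k+1), H y|
        ≤ |s - (X (k+1) - X k) * H (X k)|
          + |(X (k+1) - X k) * H (X k) - ∫ y in X k..X (k+1), H y| := abs_sub_le _ _ _
      _ ≤ A*s^2/c + (ε/6)*(X (k+1) - X k) := add_le_add h1 h2
  -- decomposition
  have hadj : ∑ k ∈ Finset.range n, ∫ y in X k..X (k+1), H y = ∫ y in (0:ℝ)..X n, H y := by
    have := intervalIntegral.sum_integral_adjacent_intervals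
      (f := H) (μ := MeasureTheory.volume) (a := X) (n := n)
      (fun k _ => hHcont.intervalIntegrable _ _)
    rwa [hX0] at this
  have hsplit : (∫ y in (0:ℝ)..1, H y) + ∫ y in (1:ℝ)..X n, H y = ∫ y in (0:ℝ)..X n, H y :=
    intervalIntegral.integral_add_adjacent_intervals
      (hHcont.intervalIntegrable _ _) (hHcont.intervalIntegrable _ _)
  have htail : |∫ y in (1:ℝ)..X n, H y| ≤ c⁻¹ * (M * s) := by
    have hb : ∀ y ∈ Set.uIoc (1:ℝ) (X n), ‖H y‖ ≤ c⁻¹ := by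
      intro y hy
      rw [uIoc_of_le hTn] at hy
      have hymem : y ∈ Icc (0:ℝ) 2 := ⟨by linarith [hy.1.le], by linarith [hy.2, hXn2]⟩
      rw [Real.norm_eq_abs, abs_of_pos (hHpos y)]
      exact hHle y hymem
    calc |∫ y in (1:ℝ)..X n, H y| ≤ c⁻¹ * |X n - 1| :=
          intervalIntegral.norm_integral_le_of_norm_le_const hb
      _ ≤ c⁻¹ * (M * s) := by
          rw [abs_of_nonneg (by linarith)]
          have h2 := (hXb n le_rfl).2
          have hcinv : (0:ℝ) ≤ c⁻¹ := by positivity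
          apply mul_le_mul_of_nonneg_left _ hcinv
          linarith
  rw [Real.dist_eq]
  have key : (t - t₀) * (n:ℝ) - ∫ x in (0:ℝ)..1, H x
      = (∑ k ∈ Finset.range n, (s - ∫ y in X k..X (k+1), H y)) + ∫ y in (1:ℝ)..X n, H y := by
    rw [Finset.sum_sub_distrib, hadj, ← hsplit, Finset.sum_const, Finset.card_range,
      nsmul_eq_mul, ← hsdef]
    ring
  rw [mul_comm (t - t₀) (n:ℝ)] at key
  rw [mul_comm (t - t₀) (n:ℝ), key]
  have hsum_abs : |∑ k ∈ Finset.range n, (s - ∫ y in X k..X (k+1), H y)|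
      ≤ (n:ℝ) * (A*s^2/c) + (ε/6) * X n := by
    calc |∑ k ∈ Finset.range n, (s - ∫ y in X k..X (k+1), H y)|
        ≤ ∑ k ∈ Finset.range n, |s - ∫ y in X k..X (k+1), H y| :=
          Finset.abs_sum_le_sum_abs _ _
      _ ≤ ∑ k ∈ Finset.range n, (A*s^2/c + (ε/6)*(X (k+1) - X k)) :=
          Finset.sum_le_sum (fun k hk => hterm k (Finset.mem_range.1 hk))
      _ = (n:ℝ) * (A*s^2/c) + (ε/6) * X n := by
          rw [Finset.sum_add_distrib, Finset.sum_const, Finset.card_range, nsmul_eq_mul,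
            ← Finset.mul_sum, hsum]
  have e5 : (n:ℝ) * (A*s^2/c) ≤ 4*A*s/c^2 := by
    have h' := mul_le_mul_of_nonneg_right hns (show (0:ℝ) ≤ A*s/c by positivity)
    calc (n:ℝ)*(A*s^2/c) = ((n:ℝ)*s)*(A*s/c) := by ring
      _ ≤ (4/c)*(A*s/c) := h'
      _ = 4*A*s/c^2 := by ring
  have e6 : B*s = 4*A*s/c^2 + c⁻¹ * (M * s) := by rw [hBdef]; field_simp
  have e8 : (ε/6) * X n ≤ ε/3 := by
    calc (ε/6) * X n ≤ (ε/6) * 2 := mul_le_mul_of_nonneg_left hXn2 (by positivity)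
      _ = ε/3 := by ring
  calc |(∑ k ∈ Finset.range n, (s - ∫ y in X k..X (k+1), H y)) + ∫ y in (1:ℝ)..X n, H y|
      ≤ |∑ k ∈ Finset.range n, (s - ∫ y in X k..X (k+1), H y)| + |∫ y in (1:ℝ)..X n, H y| :=
        abs_add_le _ _
    _ ≤ ((n:ℝ) * (A*s^2/c) + (ε/6) * X n) + c⁻¹ * (M * s) := add_le_add hsum_abs htail
    _ ≤ (4*A*s/c^2 + c⁻¹ * (M * s)) + ε/3 := by linarith
    _ = B*s + ε/3 := by rw [e6]
    _ < ε/3 + ε/3 := by linarith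
    _ < ε := by linarith
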